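/- arXiv:2403.13178 — 4 statements merged into one kernel-verified Lean document; each statement's English description precedes it below -/
import Mathlib

section
/- Let n, p̃ be positive natural numbers, let H be a real n×p̃ matrix, let ε > 0, σ > 0, and let N, m > 0 be real scalars (m playing the role of the minibatch size n and N the pseudo-population size). Set B = ε·I_{p̃}, R = 2σ²·I_n, K = B Hᵀ (H B Hᵀ + R)⁻¹ (noting that H B Hᵀ + R is positive definite, hence invertible), and Σ = (m/N)·(I_{p̃} − K H). Then for any vectors φ, u, w ∈ ℝ^{p̃} and r, v ∈ ℝⁿ, if φᶠ = φ + (ε/2)(m/N)·u + w and φᵃ = φᶠ + K(r − Hφᶠ − v), then φᵃ = φ + (ε/2)·Σ·(u + (N/(m σ²))·Hᵀ(r − Hφ)) + (I − KH)w − Kv. (This is the algebraic core of Lemma 1: the forecast–analysis step of the LKTD prototype equals a preconditioned Langevin/SGLD step with preconditioner Σ.) -/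
set_option maxHeartbeats 1000000

open Matrix

lemma aux_posSemidef_smul {k : Type*} [Fintype k] {A : Matrix k k ℝ} {c : ℝ}
    (hc : 0 ≤ c) (hA : A.PosSemidef) : (c • A).PosSemidef := by
  have h1 : (c • A).IsHermitian := by
    show (c • A)ᴴ = c • A
    rw [Matrix.conjTranspose_smul, hA.1.eq]
    simp
  refine Matrix.PosSemidef.of_dotProduct_mulVec_nonneg h1 (fun x => ?_)
  rw [smul_mulVec, dotProduct_smul]
  simpa using mul_nonneg hc (hA.dotProduct_mulVec_nonneg x)

lemma aux_posDef_smul_one {k : Type*} [Fintype k] [DecidableEq k] {c : ℝ}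
    (hc : 0 < c) : ((c • 1 : Matrix k k ℝ)).PosDef := by
  rw [smul_one_eq_diagonal]
  exact Matrix.posDef_diagonal_iff.mpr fun i => hc

/-- Algebraic core of Lemma 1: the forecast–analysis step of the LKTD prototype
equals a preconditioned Langevin/SGLD step with preconditioner Σ. -/
theorem stmt_0 (n p : ℕ) (hn : 0 < n) (hp : 0 < p)
    (H : Matrix (Fin n) (Fin p) ℝ) (ε σ N m : ℝ)
    (hε : 0 < ε) (hσ : 0 < σ) (hN : 0 < N) (hm : 0 < m)
    (B : Matrix (Fin p) (Fin p) ℝ) (hB : B = ε • (1 : Matrix (Fin p) (Fin p) ℝ))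
    (R : Matrix (Fin n) (Fin n) ℝ)
    (hR : R = (2 * σ ^ 2) • (1 : Matrix (Fin n) (Fin n) ℝ))
    (K : Matrix (Fin p) (Fin n) ℝ) (hK : K = B * Hᵀ * (H * B * Hᵀ + R)⁻¹)
    (Sg : Matrix (Fin p) (Fin p) ℝ)
    (hSg : Sg = (m / N) • ((1 : Matrix (Fin p) (Fin p) ℝ) - K * H))
    (φ u w φf φa : Fin p → ℝ) (r v : Fin n → ℝ)
    (hφf : φf = φ + ((ε / 2) * (m / N)) • u + w)
    (hφa : φa = φf + K.mulVec (r - H.mulVec φf - v)) :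
    (H * B * Hᵀ + R).PosDef ∧
    φa = φ + (ε / 2) • Sg.mulVec (u + (N / (m * σ ^ 2)) • Hᵀ.mulVec (r - H.mulVec φ))
      + ((1 : Matrix (Fin p) (Fin p) ℝ) - K * H).mulVec w - K.mulVec v := by
  have hσ2 : (0:ℝ) < 2 * σ ^ 2 := by positivity
  set S : Matrix (Fin n) (Fin n) ℝ := H * B * Hᵀ + R with hS
  have hSval : S = ε • (H * Hᵀ) + (2 * σ ^ 2) • 1 := by
    rw [hS, hB, hR, Matrix.mul_smul, Matrix.mul_one, Matrix.smul_mul]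
  have hHHT : (H * Hᵀ).PosSemidef := by
    simpa using Matrix.posSemidef_self_mul_conjTranspose H
  have hpos : S.PosDef := by
    rw [hSval]
    exact Matrix.PosDef.posSemidef_add (aux_posSemidef_smul hε.le hHHT)
      (aux_posDef_smul_one hσ2)
  refine ⟨hpos, ?_⟩
  have hSinv : S⁻¹ * S = 1 :=
    Matrix.nonsing_inv_mul S ((Matrix.isUnit_iff_isUnit_det S).mp hpos.isUnit)
  have hKval : K = ε • (Hᵀ * S⁻¹) := by
    rw [hK, hB, Matrix.smul_mul, Matrix.one_mul, Matrix.smul_mul]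
  have hKS : K * S = ε • Hᵀ := by
    rw [hKval, Matrix.smul_mul, Matrix.mul_assoc, hSinv, Matrix.mul_one]
  have h2 : ε • (H * Hᵀ) = S - (2 * σ ^ 2) • 1 := by rw [hSval]; abel
  have hkey : (2 * σ ^ 2) • K = ε • (((1 : Matrix (Fin p) (Fin p) ℝ) - K * H) * Hᵀ) := by
    calc (2 * σ ^ 2) • K = K * ((2 * σ ^ 2) • (1 : Matrix (Fin n) (Fin n) ℝ)) := by
          rw [Matrix.mul_smul, Matrix.mul_one]
      _ = K * S - K * (ε • (H * Hᵀ)) := by rw [h2, Matrix.mul_sub]; abel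
      _ = ε • Hᵀ - ε • (K * H * Hᵀ) := by
          rw [hKS, Matrix.mul_smul, Matrix.mul_assoc]
      _ = ε • (((1 : Matrix (Fin p) (Fin p) ℝ) - K * H) * Hᵀ) := by
          rw [Matrix.sub_mul, Matrix.one_mul, smul_sub]
  have hkey' : ((1 : Matrix (Fin p) (Fin p) ℝ) - K * H) * Hᵀ = ((2 * σ ^ 2) / ε) • K := by
    have h := congrArg (fun M => ε⁻¹ • M) hkey
    simp only [smul_smul] at h
    rw [inv_mul_cancel₀ hε.ne', one_smul] at h
    rw [← h, div_eq_mul_inv, mul_comm]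
  have hvec : ∀ x : Fin n → ℝ,
      ((1 : Matrix (Fin p) (Fin p) ℝ) - K * H).mulVec (Hᵀ.mulVec x)
        = ((2 * σ ^ 2) / ε) • K.mulVec x := by
    intro x
    rw [Matrix.mulVec_mulVec, hkey', Matrix.smul_mulVec]
  have hone : ε / 2 * (m / N) * (N / (m * σ ^ 2)) * (2 * σ ^ 2 / ε) = 1 := by
    field_simp
  have key : (ε / 2) • Sg.mulVec (u + (N / (m * σ ^ 2)) • Hᵀ.mulVec (r - H.mulVec φ))
      = ((ε / 2) * (m / N)) • ((1 : Matrix (Fin p) (Fin p) ℝ) - K * H).mulVec u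
        + K.mulVec (r - H.mulVec φ) := by
    rw [hSg, Matrix.smul_mulVec, Matrix.mulVec_add, Matrix.mulVec_smul, hvec,
      smul_add, smul_add, smul_smul]
    congr 1
    rw [smul_smul, smul_smul, smul_smul, hone, one_smul]
  rw [hφa, hφf, key]
  simp only [Matrix.mulVec_add, Matrix.mulVec_sub, Matrix.mulVec_smul, Matrix.sub_mulVec,
    Matrix.one_mulVec, Matrix.mulVec_mulVec, smul_sub]
  module
end

section
/- Let H be a real n×p matrix, let R be a symmetric positive definite real n×n matrix, let ε₀ > 0, let c > 0, and let μ ≥ 0 be such that μ·I_p − Hᵀ R⁻¹ H is positive semidefinite. Then for every ε with 0 < ε ≤ ε₀, the matrix Σ = c·(I_p − ε Hᵀ (ε H Hᵀ + R)⁻¹ H) is symmetric positive definite, c·I_p − Σ is positive semidefinite, and Σ − (c/(1 + ε₀ μ))·I_p is positive semidefinite. In particular, the eigenvalues of Σ all lie in the interval [c/(1 + ε₀ μ), c], so Σ has bounded positive eigenvalues uniformly over all 0 < ε ≤ ε₀. -/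
open Matrix

section helpers
variable {q : Type*} [Fintype q] [DecidableEq q]

lemma psd_smul' {A : Matrix q q ℝ} (hA : A.PosSemidef) {a : ℝ} (ha : 0 ≤ a) :
    (a • A).PosSemidef := by
  refine PosSemidef.of_dotProduct_mulVec_nonneg ?_ (fun x => ?_)
  · unfold Matrix.IsHermitian
    rw [conjTranspose_smul, hA.1]
    simp
  · rw [smul_mulVec, dotProduct_smul]
    exact smul_nonneg ha (hA.dotProduct_mulVec_nonneg x)

lemma pd_smul' {A : Matrix q q ℝ} (hA : A.PosDef) {a : ℝ} (ha : 0 < a) :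
    (a • A).PosDef := by
  refine PosDef.of_dotProduct_mulVec_pos ?_ (fun x hx => ?_)
  · unfold Matrix.IsHermitian
    rw [conjTranspose_smul, hA.1]
    simp
  · rw [smul_mulVec, dotProduct_smul]
    exact smul_pos ha (hA.dotProduct_mulVec_pos hx)

/-- If `A` is positive definite and `D` positive semidefinite then
`A⁻¹ - (A + D)⁻¹` is positive semidefinite. -/
lemma inv_sub_inv_psd' {A D : Matrix q q ℝ} (hA : A.PosDef) (hD : D.PosSemidef) :
    (A⁻¹ - (A + D)⁻¹).PosSemidef := by
  have hB : (A + D).PosDef := hA.add_posSemidef hD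
  have hAi : IsUnit A.det := hA.det_pos.ne'.isUnit
  have hBi : IsUnit (A + D).det := hB.det_pos.ne'.isUnit
  have hAA : A * A⁻¹ = 1 := mul_nonsing_inv _ hAi
  have hAA' : A⁻¹ * A = 1 := nonsing_inv_mul _ hAi
  have hBB : (A + D) * (A + D)⁻¹ = 1 := mul_nonsing_inv _ hBi
  have hBB' : (A + D)⁻¹ * (A + D) = 1 := nonsing_inv_mul _ hBi
  have key : A⁻¹ - (A + D)⁻¹ = (A + D)⁻¹ᵀ * (D + D * A⁻¹ * D) * (A + D)⁻¹ := by
    have hsym : (A + D)⁻¹ᵀ = (A + D)⁻¹ := by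
      have := hB.isHermitian.inv
      rwa [Matrix.IsHermitian, conjTranspose_eq_transpose_of_trivial] at this
    rw [hsym]
    have e1 : (A + D) * A⁻¹ * (A + D) = A + D + D + D * A⁻¹ * D := by
      rw [add_mul A D A⁻¹, hAA, add_mul, one_mul, mul_add, Matrix.mul_assoc D A⁻¹ A, hAA',
        mul_one]
      abel
    have expand : (A + D) * (A⁻¹ - (A + D)⁻¹) * (A + D) = D + D * A⁻¹ * D := by
      rw [mul_sub, hBB, sub_mul, one_mul, e1]
      abel
    calc A⁻¹ - (A + D)⁻¹
        = (A + D)⁻¹ * ((A + D) * (A⁻¹ - (A + D)⁻¹) * (A + D)) * (A + D)⁻¹ := by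
          rw [← Matrix.mul_assoc, ← Matrix.mul_assoc, hBB', Matrix.one_mul,
            Matrix.mul_assoc, hBB, Matrix.mul_one]
      _ = (A + D)⁻¹ * (D + D * A⁻¹ * D) * (A + D)⁻¹ := by rw [expand]
  rw [key]
  have hmid : (D + D * A⁻¹ * D).PosSemidef := by
    refine hD.add ?_
    have hDT : Dᵀ = D := (conjTranspose_eq_transpose_of_trivial D).symm.trans hD.1
    have h1 : (Dᴴ * A⁻¹ * D).PosSemidef := hA.posSemidef.inv.conjTranspose_mul_mul_same D
    simpa [hDT] using h1
  have h2 := hmid.conjTranspose_mul_mul_same (A + D)⁻¹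
  rwa [conjTranspose_eq_transpose_of_trivial] at h2

end helpers

/-- The LKTD preconditioner `Σ = c (I − ε Hᵀ(ε H Hᵀ + R)⁻¹H)` is symmetric
positive definite with eigenvalues in `[c/(1+ε₀μ), c]`, uniformly over all
learning rates `0 < ε ≤ ε₀`. -/
theorem stmt_4 (n p : ℕ)
    (H : Matrix (Fin n) (Fin p) ℝ)
    (R : Matrix (Fin n) (Fin n) ℝ) (hR : R.PosDef)
    (ε₀ c μ : ℝ) (hε₀ : 0 < ε₀) (hc : 0 < c) (hμ : 0 ≤ μ)
    (hμH : (μ • (1 : Matrix (Fin p) (Fin p) ℝ) - Hᵀ * R⁻¹ * H).PosSemidef) :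
    ∀ (ε : ℝ) (S : Matrix (Fin p) (Fin p) ℝ), 0 < ε → ε ≤ ε₀ →
      S = c • ((1 : Matrix (Fin p) (Fin p) ℝ)
            - ε • (Hᵀ * (ε • (H * Hᵀ) + R)⁻¹ * H)) →
      S.PosDef ∧
      (c • (1 : Matrix (Fin p) (Fin p) ℝ) - S).PosSemidef ∧
      (S - (c / (1 + ε₀ * μ)) • (1 : Matrix (Fin p) (Fin p) ℝ)).PosSemidef ∧
      ∀ x ∈ spectrum ℝ S, x ∈ Set.Icc (c / (1 + ε₀ * μ)) c := by
  intro ε S hε hεε₀ hS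
  set M : Matrix (Fin p) (Fin p) ℝ := Hᵀ * R⁻¹ * H with hMdef
  set A : Matrix (Fin n) (Fin n) ℝ := ε • (H * Hᵀ) + R with hAdef
  set X : Matrix (Fin p) (Fin p) ℝ := Hᵀ * A⁻¹ * H with hXdef
  set B : Matrix (Fin p) (Fin p) ℝ := 1 + ε • M with hBdef
  have hHT : Hᴴ = Hᵀ := conjTranspose_eq_transpose_of_trivial H
  -- A is PosDef
  have hHH : (H * Hᵀ).PosSemidef := by
    have := posSemidef_self_mul_conjTranspose H
    rwa [hHT] at this
  have hApd : A.PosDef := Matrix.PosDef.posSemidef_add (psd_smul' hHH hε.le) hR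
  -- M is PosSemidef
  have hMpsd : M.PosSemidef := by
    have h1 := hR.inv.posSemidef.conjTranspose_mul_mul_same H
    rwa [hHT] at h1
  -- B is PosDef
  have hBpd : B.PosDef := Matrix.PosDef.add_posSemidef Matrix.PosDef.one (psd_smul' hMpsd hε.le)
  -- dets
  have hRi : IsUnit R.det := hR.det_pos.ne'.isUnit
  have hAi : IsUnit A.det := hApd.det_pos.ne'.isUnit
  have hRR : R⁻¹ * R = 1 := nonsing_inv_mul _ hRi
  have hAA : A * A⁻¹ = 1 := mul_nonsing_inv _ hAi
  -- Woodbury-type identity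
  have hdiff : R⁻¹ - A⁻¹ = ε • (R⁻¹ * (H * Hᵀ) * A⁻¹) := by
    calc R⁻¹ - A⁻¹ = R⁻¹ * (A * A⁻¹) - (R⁻¹ * R) * A⁻¹ := by rw [hAA, hRR, mul_one, one_mul]
      _ = R⁻¹ * (A - R) * A⁻¹ := by rw [mul_sub, sub_mul, Matrix.mul_assoc, Matrix.mul_assoc]
      _ = ε • (R⁻¹ * (H * Hᵀ) * A⁻¹) := by
          rw [hAdef, add_sub_cancel_right, Matrix.mul_smul, Matrix.smul_mul]
  have hMX : M - X = ε • (M * X) := by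
    have : M - X = Hᵀ * (R⁻¹ - A⁻¹) * H := by
      rw [Matrix.mul_sub, Matrix.sub_mul]
    rw [this, hdiff, Matrix.mul_smul, Matrix.smul_mul]
    congr 1
    rw [hMdef, hXdef]
    simp only [Matrix.mul_assoc]
  have wood : B * (1 - ε • X) = 1 := by
    have expand : B * (1 - ε • X) = 1 + ε • (M - X - ε • (M * X)) := by
      rw [hBdef, mul_sub, mul_one, Matrix.mul_smul, add_mul, one_mul, Matrix.smul_mul]
      module
    rw [expand, hMX, sub_self, smul_zero, add_zero]
  have hBinv : B⁻¹ = 1 - ε • X := inv_eq_right_inv wood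
  have hSB : S = c • B⁻¹ := by rw [hS, hBinv]
  -- Part 1
  have hSpd : S.PosDef := by
    rw [hSB]; exact pd_smul' hBpd.inv hc
  -- Part 2
  have hub : (c • (1 : Matrix (Fin p) (Fin p) ℝ) - S).PosSemidef := by
    have h1 : ((1 : Matrix (Fin p) (Fin p) ℝ)⁻¹ - (1 + ε • M)⁻¹).PosSemidef :=
      inv_sub_inv_psd' Matrix.PosDef.one (psd_smul' hMpsd hε.le)
    rw [inv_one] at h1
    have h2 := psd_smul' h1 hc.le
    rw [smul_sub] at h2
    rwa [hSB]
  -- Part 3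
  have ht : (0:ℝ) < 1 + ε₀ * μ := by positivity
  have hlb : (S - (c / (1 + ε₀ * μ)) • (1 : Matrix (Fin p) (Fin p) ℝ)).PosSemidef := by
    set D : Matrix (Fin p) (Fin p) ℝ := (ε₀ * μ) • 1 - ε • M with hDdef
    have hDpsd : D.PosSemidef := by
      have e : D = (ε₀ - ε) • (μ • (1 : Matrix (Fin p) (Fin p) ℝ))
          + ε • (μ • (1 : Matrix (Fin p) (Fin p) ℝ) - M) := by
        rw [hDdef]
        module
      rw [e]
      exact (psd_smul' (psd_smul' Matrix.PosSemidef.one hμ) (by linarith)).add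
        (psd_smul' hμH hε.le)
    have hBD : B + D = (1 + ε₀ * μ) • 1 := by
      rw [hBdef, hDdef, add_smul, one_smul]
      abel
    have h1 : (B⁻¹ - (B + D)⁻¹).PosSemidef := inv_sub_inv_psd' hBpd hDpsd
    have hinvt : ((1 + ε₀ * μ) • (1 : Matrix (Fin p) (Fin p) ℝ))⁻¹
        = (1 + ε₀ * μ)⁻¹ • 1 := by
      apply inv_eq_right_inv
      rw [smul_mul_smul_comm, mul_one, mul_inv_cancel₀ ht.ne', one_smul]
    rw [hBD, hinvt] at h1
    have h2 := psd_smul' h1 hc.le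
    rw [smul_sub, smul_smul] at h2
    rwa [hSB, div_eq_mul_inv]
  refine ⟨hSpd, hub, hlb, ?_⟩
  -- Part 4: spectrum
  intro x hx
  rw [spectrum.mem_iff] at hx
  have halg : (algebraMap ℝ (Matrix (Fin p) (Fin p) ℝ)) x = x • 1 := by
    rw [Algebra.algebraMap_eq_smul_one]
  rw [halg] at hx
  have hdet : (x • (1 : Matrix (Fin p) (Fin p) ℝ) - S).det = 0 := by
    by_contra h
    exact hx ((isUnit_iff_isUnit_det _).mpr (isUnit_iff_ne_zero.mpr h))
  obtain ⟨v, hv0, hv⟩ := (exists_mulVec_eq_zero_iff).mpr hdet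
  have hev : S *ᵥ v = x • v := by
    have := hv
    rw [sub_mulVec, smul_mulVec, one_mulVec, sub_eq_zero] at this
    rw [← this]
  have hvv : 0 < v ⬝ᵥ v := by
    have := dotProduct_star_self_pos_iff (v := v) |>.mpr hv0
    simpa using this
  constructor
  · -- lower bound
    have := hlb.dotProduct_mulVec_nonneg v
    rw [sub_mulVec, smul_mulVec, one_mulVec, hev, dotProduct_sub,
      dotProduct_smul, dotProduct_smul] at this
    simp only [star_trivial, smul_eq_mul] at this
    nlinarith [hvv]
  · -- upper bound
    have := hub.dotProduct_mulVec_nonneg v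
    rw [sub_mulVec, smul_mulVec, one_mulVec, hev, dotProduct_sub,
      dotProduct_smul, dotProduct_smul] at this
    simp only [star_trivial, smul_eq_mul] at this
    nlinarith [hvv]
end

section
/- Let (Ω, F, P) be a probability space and let θ, G, e be square-integrable random vectors in ℝ^d. Let ε > 0, β > 0, m > 0, b ≥ 0, M ≥ 0, B ≥ 0 and suppose: (i) E⟨θ, G⟩ ≥ m·E‖θ‖² − b; (ii) E‖G‖² ≤ 2M²·E‖θ‖² + 2B²; (iii) E⟨θ − εG, e⟩ = 0 and E⟨e, e⟩ = d (as holds when e is a standard Gaussian vector independent of (θ, G)). Then the SGLD update θ' = θ − εG + √(2ε/β)·e satisfies E‖θ'‖² ≤ (1 − 2εm + 2ε²M²)·E‖θ‖² + 2εb + 2ε²B² + 2εd/β. -/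
open MeasureTheory
open scoped RealInnerProductSpace

lemma my_integrable_inner {Ω : Type*} [MeasurableSpace Ω] {P : Measure Ω}
    {E : Type*} [NormedAddCommGroup E] [InnerProductSpace ℝ E]
    {f g : Ω → E} (hf : MemLp f 2 P) (hg : MemLp g 2 P) :
    Integrable (fun ω => ⟪f ω, g ω⟫) P := by
  have hint : Integrable (fun ω => (‖f ω‖ ^ 2 + ‖g ω‖ ^ 2) / 2) P :=
    (((memLp_two_iff_integrable_sq_norm hf.1).1 hf).add
      ((memLp_two_iff_integrable_sq_norm hg.1).1 hg)).div_const 2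
  refine hint.mono' (hf.1.inner hg.1) ?_
  filter_upwards with ω
  calc ‖⟪f ω, g ω⟫‖ ≤ ‖f ω‖ * ‖g ω‖ := norm_inner_le_norm _ _
    _ ≤ (‖f ω‖ ^ 2 + ‖g ω‖ ^ 2) / 2 := by nlinarith [sq_nonneg (‖f ω‖ - ‖g ω‖)]

lemma my_integrable_sq {Ω : Type*} [MeasurableSpace Ω] {P : Measure Ω}
    {E : Type*} [NormedAddCommGroup E]
    {f : Ω → E} (hf : MemLp f 2 P) : Integrable (fun ω => ‖f ω‖ ^ 2) P :=
  (memLp_two_iff_integrable_sq_norm hf.1).1 hf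

/-- One-step second-moment contraction for the SGLD update
`θ' = θ − εG + √(2ε/β)·e`. -/
theorem stmt_7 {Ω : Type*} [MeasurableSpace Ω] (P : Measure Ω)
    [IsProbabilityMeasure P] (d : ℕ)
    (θ G e : Ω → EuclideanSpace ℝ (Fin d))
    (hθ : MemLp θ 2 P) (hG : MemLp G 2 P) (he : MemLp e 2 P)
    (ε β m b M B : ℝ) (hε : 0 < ε) (hβ : 0 < β) (hm : 0 < m) (hb : 0 ≤ b)
    (hM : 0 ≤ M) (hB : 0 ≤ B)
    (h1 : m * (∫ ω, ‖θ ω‖ ^ 2 ∂P) - b ≤ ∫ ω, ⟪θ ω, G ω⟫ ∂P)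
    (h2 : (∫ ω, ‖G ω‖ ^ 2 ∂P) ≤ 2 * M ^ 2 * (∫ ω, ‖θ ω‖ ^ 2 ∂P) + 2 * B ^ 2)
    (h3 : (∫ ω, ⟪θ ω - ε • G ω, e ω⟫ ∂P) = 0)
    (h4 : (∫ ω, ⟪e ω, e ω⟫ ∂P) = (d : ℝ)) :
    (∫ ω, ‖θ ω - ε • G ω + Real.sqrt (2 * ε / β) • e ω‖ ^ 2 ∂P) ≤
      (1 - 2 * ε * m + 2 * ε ^ 2 * M ^ 2) * (∫ ω, ‖θ ω‖ ^ 2 ∂P)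
        + 2 * ε * b + 2 * ε ^ 2 * B ^ 2 + 2 * ε * (d : ℝ) / β := by
  set c : ℝ := Real.sqrt (2 * ε / β) with hc
  have hX : MemLp (fun ω => θ ω - ε • G ω) 2 P := hθ.sub (hG.const_smul ε)
  have hc2 : c ^ 2 = 2 * ε / β := Real.sq_sqrt (by positivity)
  -- integrabilities
  have iθ := my_integrable_sq hθ
  have iG := my_integrable_sq hG
  have iX := my_integrable_sq hX
  have ie := my_integrable_sq he
  have iθG := my_integrable_inner hθ hG
  have iXe := my_integrable_inner hX he
  have iee := my_integrable_inner he he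
  -- expand the square
  have expand : ∀ ω, ‖θ ω - ε • G ω + c • e ω‖ ^ 2
      = ‖θ ω - ε • G ω‖ ^ 2 + 2 * c * ⟪θ ω - ε • G ω, e ω⟫ + c ^ 2 * ⟪e ω, e ω⟫ := by
    intro ω
    have h := norm_add_sq_real (θ ω - ε • G ω) (c • e ω)
    rw [h, real_inner_smul_right, norm_smul, real_inner_self_eq_norm_sq]
    simp [mul_pow]
    ring
  have expandX : ∀ ω, ‖θ ω - ε • G ω‖ ^ 2
      = ‖θ ω‖ ^ 2 - 2 * ε * ⟪θ ω, G ω⟫ + ε ^ 2 * ‖G ω‖ ^ 2 := by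
    intro ω
    have h := norm_sub_sq_real (θ ω) (ε • G ω)
    rw [h, real_inner_smul_right, norm_smul]
    simp [mul_pow]
    ring
  have I1 : (∫ ω, ‖θ ω - ε • G ω + c • e ω‖ ^ 2 ∂P)
      = (∫ ω, ‖θ ω - ε • G ω‖ ^ 2 ∂P) + (2 * c) * (∫ ω, ⟪θ ω - ε • G ω, e ω⟫ ∂P)
        + c ^ 2 * (∫ ω, ⟪e ω, e ω⟫ ∂P) := by
    simp_rw [expand]
    have e1 : ∫ ω, (‖θ ω - ε • G ω‖ ^ 2 + 2 * c * ⟪θ ω - ε • G ω, e ω⟫)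
          + c ^ 2 * ⟪e ω, e ω⟫ ∂P
        = (∫ ω, ‖θ ω - ε • G ω‖ ^ 2 + 2 * c * ⟪θ ω - ε • G ω, e ω⟫ ∂P)
          + ∫ ω, c ^ 2 * ⟪e ω, e ω⟫ ∂P :=
      integral_add (iX.add (iXe.const_mul (2 * c))) (iee.const_mul (c ^ 2))
    have e2 : ∫ ω, ‖θ ω - ε • G ω‖ ^ 2 + 2 * c * ⟪θ ω - ε • G ω, e ω⟫ ∂P
        = (∫ ω, ‖θ ω - ε • G ω‖ ^ 2 ∂P) + ∫ ω, 2 * c * ⟪θ ω - ε • G ω, e ω⟫ ∂P :=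
      integral_add iX (iXe.const_mul (2 * c))
    rw [e1, e2, integral_const_mul, integral_const_mul]
  have I2 : (∫ ω, ‖θ ω - ε • G ω‖ ^ 2 ∂P)
      = (∫ ω, ‖θ ω‖ ^ 2 ∂P) - (2 * ε) * (∫ ω, ⟪θ ω, G ω⟫ ∂P)
        + ε ^ 2 * (∫ ω, ‖G ω‖ ^ 2 ∂P) := by
    simp_rw [expandX]
    have e1 : ∫ ω, (‖θ ω‖ ^ 2 - 2 * ε * ⟪θ ω, G ω⟫) + ε ^ 2 * ‖G ω‖ ^ 2 ∂P
        = (∫ ω, ‖θ ω‖ ^ 2 - 2 * ε * ⟪θ ω, G ω⟫ ∂P) + ∫ ω, ε ^ 2 * ‖G ω‖ ^ 2 ∂P :=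
      integral_add (iθ.sub (iθG.const_mul (2 * ε))) (iG.const_mul (ε ^ 2))
    have e2 : ∫ ω, ‖θ ω‖ ^ 2 - 2 * ε * ⟪θ ω, G ω⟫ ∂P
        = (∫ ω, ‖θ ω‖ ^ 2 ∂P) - ∫ ω, 2 * ε * ⟪θ ω, G ω⟫ ∂P :=
      integral_sub iθ (iθG.const_mul (2 * ε))
    rw [e1, e2, integral_const_mul, integral_const_mul]
  rw [I1, h3, h4, I2, hc2]
  have hθ2 : 0 ≤ ∫ ω, ‖θ ω‖ ^ 2 ∂P := integral_nonneg fun ω => by positivity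
  have key : 2 * ε / β * (d : ℝ) = 2 * ε * (d : ℝ) / β := by ring
  nlinarith [mul_pos hε hε, sq_nonneg ε, mul_le_mul_of_nonneg_left h2 (sq_nonneg ε),
    mul_le_mul_of_nonneg_left h1 (by positivity : (0:ℝ) ≤ 2 * ε)]
end

section
/- Let (Z, 𝒜, μ) be a measure space, d and q positive natural numbers, and let G : Z → ℝ^d be measurable with ∫_Z ‖G(z)‖² dμ(z) ≤ M for some M ≥ 0. Let θ ↦ p_θ be a family of measurable real-valued functions on Z indexed by θ ∈ ℝ^q, each square-integrable, satisfying the Lipschitz condition ∫_Z |p_θ(z) − p_ϑ(z)|² dμ(z) ≤ L·‖θ − ϑ‖² for all θ, ϑ and some L ≥ 0. Then for any θ, θ₁, …, θ_R ∈ ℝ^q (R ≥ 1), writing p̄ = (1/R)·Σ_{i=1}^{R} p_{θ_i}, the Bochner integral b = ∫_Z G(z)·(p̄(z) − p_θ(z)) dμ(z) is well defined and satisfies ‖b‖² ≤ (M·L/R)·Σ_{i=1}^{R} ‖θ_i − θ‖². -/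
open MeasureTheory

/-- Bound on the replay-buffer gradient bias (the key intermediate bound (A31)
in Theorem 2): `‖∫ G · (p̄ − p_θ) dμ‖² ≤ (M L / R) Σᵢ ‖θᵢ − θ‖²`. -/
theorem stmt_13 {Z : Type*} [MeasurableSpace Z] (μ : Measure Z)
    (d q : ℕ) (hd : 0 < d) (hq : 0 < q)
    (G : Z → EuclideanSpace ℝ (Fin d)) (hGmeas : Measurable G)
    (M : ℝ) (hM : 0 ≤ M)
    (hG2 : (∫⁻ z, (‖G z‖₊ : ENNReal) ^ 2 ∂μ) ≤ ENNReal.ofReal M)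
    (p : EuclideanSpace ℝ (Fin q) → Z → ℝ)
    (hpmeas : ∀ θ, Measurable (p θ))
    (hpL2 : ∀ θ, MemLp (p θ) 2 μ)
    (L : ℝ) (hL : 0 ≤ L)
    (hLip : ∀ θ ϑ : EuclideanSpace ℝ (Fin q),
      (∫⁻ z, (‖p θ z - p ϑ z‖₊ : ENNReal) ^ 2 ∂μ) ≤
        ENNReal.ofReal (L * ‖θ - ϑ‖ ^ 2))
    (R : ℕ) (hR : 1 ≤ R)
    (θ : EuclideanSpace ℝ (Fin q)) (θs : Fin R → EuclideanSpace ℝ (Fin q)) :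
    Integrable
      (fun z => ((1 / (R : ℝ)) * ∑ i, p (θs i) z - p θ z) • G z) μ ∧
    ‖∫ z, ((1 / (R : ℝ)) * ∑ i, p (θs i) z - p θ z) • G z ∂μ‖ ^ 2 ≤
      M * L / (R : ℝ) * ∑ i, ‖θs i - θ‖ ^ 2 := by
  have hR0 : (0:ℝ) < R := by exact_mod_cast hR
  set f : Z → ℝ := fun z => (1 / (R : ℝ)) * ∑ i, p (θs i) z - p θ z with hf
  have hfmeas : Measurable f := by
    apply Measurable.sub
    · exact (measurable_const.mul (Finset.measurable_sum _ fun i _ => hpmeas (θs i)))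
    · exact hpmeas θ
  -- pointwise rewrite: f z = (1/R) * Σ (p θsᵢ z - p θ z)
  have hfz : ∀ z, f z = (1 / (R : ℝ)) * ∑ i, (p (θs i) z - p θ z) := by
    intro z
    simp only [hf, Finset.sum_sub_distrib, Finset.sum_const, Finset.card_univ,
      Fintype.card_fin, nsmul_eq_mul, mul_sub]
    field_simp
  -- pointwise bound on f z ^ 2
  have hptwise : ∀ z, f z ^ 2 ≤ (1 / (R:ℝ)) * ∑ i, (p (θs i) z - p θ z) ^ 2 := by
    intro z
    rw [hfz z, mul_pow]
    have h := sq_sum_le_card_mul_sum_sq (s := (Finset.univ : Finset (Fin R)))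
      (f := fun i => p (θs i) z - p θ z)
    simp only [Finset.card_univ, Fintype.card_fin] at h
    calc (1 / (R:ℝ)) ^ 2 * (∑ i, (p (θs i) z - p θ z)) ^ 2
        ≤ (1 / (R:ℝ)) ^ 2 * ((R:ℝ) * ∑ i, (p (θs i) z - p θ z) ^ 2) := by
          apply mul_le_mul_of_nonneg_left _ (by positivity)
          exact_mod_cast h
      _ = (1 / (R:ℝ)) * ∑ i, (p (θs i) z - p θ z) ^ 2 := by field_simp
  -- bound on ∫⁻ ‖f‖² 
  have hA : (∫⁻ z, (‖f z‖₊ : ENNReal) ^ 2 ∂μ) ≤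
      ENNReal.ofReal ((L / (R:ℝ)) * ∑ i, ‖θs i - θ‖ ^ 2) := by
    have step1 : (∫⁻ z, (‖f z‖₊ : ENNReal) ^ 2 ∂μ) ≤
        ∫⁻ z, ENNReal.ofReal (1 / (R:ℝ)) *
          ∑ i, ENNReal.ofReal ((p (θs i) z - p θ z) ^ 2) ∂μ := by
      apply lintegral_mono
      intro z
      dsimp only
      have : (‖f z‖₊ : ENNReal) ^ 2 = ENNReal.ofReal (f z ^ 2) := by
        rw [show f z ^ 2 = |f z| ^ 2 from (sq_abs _).symm,
          ENNReal.ofReal_pow (abs_nonneg _), ← Real.enorm_eq_ofReal_abs, enorm_eq_nnnorm]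
      rw [this, ← ENNReal.ofReal_sum_of_nonneg (fun i _ => sq_nonneg _),
        ← ENNReal.ofReal_mul (by positivity)]
      exact ENNReal.ofReal_le_ofReal (hptwise z)
    refine step1.trans ?_
    rw [lintegral_const_mul' _ _ (by simp),
      lintegral_finset_sum _ (fun i _ => (show Measurable fun z => ENNReal.ofReal ((p (θs i) z - p θ z) ^ 2) from (((hpmeas (θs i)).sub (hpmeas θ)).pow_const 2).ennreal_ofReal))]
    have heach : ∀ i : Fin R, (∫⁻ z, ENNReal.ofReal ((p (θs i) z - p θ z) ^ 2) ∂μ) ≤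
        ENNReal.ofReal (L * ‖θs i - θ‖ ^ 2) := by
      intro i
      have := hLip (θs i) θ
      have heq : ∀ z, ENNReal.ofReal ((p (θs i) z - p θ z) ^ 2)
          = (‖p (θs i) z - p θ z‖₊ : ENNReal) ^ 2 := by
        intro z
        rw [show (p (θs i) z - p θ z) ^ 2 = |p (θs i) z - p θ z| ^ 2 from (sq_abs _).symm,
          ENNReal.ofReal_pow (abs_nonneg _), ← Real.enorm_eq_ofReal_abs, enorm_eq_nnnorm]
      simp_rw [heq]; exact this
    calc ENNReal.ofReal (1/(R:ℝ)) * ∑ i, (∫⁻ z, ENNReal.ofReal ((p (θs i) z - p θ z) ^ 2) ∂μ)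
        ≤ ENNReal.ofReal (1/(R:ℝ)) * ∑ i, ENNReal.ofReal (L * ‖θs i - θ‖ ^ 2) :=
          mul_le_mul_right (Finset.sum_le_sum fun i _ => heach i) _
      _ = ENNReal.ofReal ((L / (R:ℝ)) * ∑ i, ‖θs i - θ‖ ^ 2) := by
          rw [← ENNReal.ofReal_sum_of_nonneg (fun i _ => by positivity),
            ← ENNReal.ofReal_mul (by positivity)]
          congr 1
          rw [← Finset.mul_sum]
          field_simp
  -- Hölder inequality
  have hconj : (2:ℝ).HolderConjugate 2 := by constructor <;> norm_num
  have hFmeas : Measurable fun z => (‖f z‖₊ : ENNReal) := hfmeas.nnnorm.coe_nnreal_ennreal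
  have hGGmeas : Measurable fun z => (‖G z‖₊ : ENNReal) := hGmeas.nnnorm.coe_nnreal_ennreal
  set A := ∫⁻ z, (‖f z‖₊ : ENNReal) ^ 2 ∂μ with hAdef
  set B := ∫⁻ z, (‖G z‖₊ : ENNReal) ^ 2 ∂μ with hBdef
  have hHolder : (∫⁻ z, (‖f z • G z‖₊ : ENNReal) ∂μ) ≤ A ^ (1/2:ℝ) * B ^ (1/2:ℝ) := by
    have h := ENNReal.lintegral_mul_le_Lp_mul_Lq μ hconj hFmeas.aemeasurable hGGmeas.aemeasurable
    simp only [Pi.mul_apply] at h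
    calc (∫⁻ z, (‖f z • G z‖₊ : ENNReal) ∂μ)
        = ∫⁻ z, (‖f z‖₊ : ENNReal) * (‖G z‖₊ : ENNReal) ∂μ := by
          apply lintegral_congr; intro z
          rw [← ENNReal.coe_mul, ← nnnorm_smul]
      _ ≤ (∫⁻ z, (‖f z‖₊ : ENNReal) ^ (2:ℝ) ∂μ) ^ (1/2:ℝ) *
          (∫⁻ z, (‖G z‖₊ : ENNReal) ^ (2:ℝ) ∂μ) ^ (1/2:ℝ) := h
      _ = A ^ (1/2:ℝ) * B ^ (1/2:ℝ) := by
          rw [hAdef, hBdef]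
          congr 1 <;> · congr 1; apply lintegral_congr; intro z
                        rw [← ENNReal.rpow_natCast]; norm_num
  have hAfin : A ≠ ⊤ := (hA.trans_lt ENNReal.ofReal_lt_top).ne
  have hBfin : B ≠ ⊤ := (hG2.trans_lt ENNReal.ofReal_lt_top).ne
  have hint : Integrable (fun z => f z • G z) μ := by
    constructor
    · exact (hfmeas.stronglyMeasurable.smul hGmeas.stronglyMeasurable).aestronglyMeasurable
    · refine hHolder.trans_lt ?_
      exact ENNReal.mul_lt_top (ENNReal.rpow_lt_top_of_nonneg (by norm_num) hAfin)
        (ENNReal.rpow_lt_top_of_nonneg (by norm_num) hBfin)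
  refine ⟨hint, ?_⟩
  have hb : (‖∫ z, f z • G z ∂μ‖₊ : ENNReal) ≤ A ^ (1/2:ℝ) * B ^ (1/2:ℝ) :=
    (enorm_integral_le_lintegral_enorm _).trans hHolder
  have hsq : ((A ^ (1/2:ℝ) * B ^ (1/2:ℝ)) : ENNReal) ^ (2:ℕ) = A * B := by
    rw [mul_pow, ← ENNReal.rpow_natCast (A ^ (1/2:ℝ)), ← ENNReal.rpow_natCast (B ^ (1/2:ℝ)),
      ← ENNReal.rpow_mul, ← ENNReal.rpow_mul]
    norm_num
  have hb2 : ENNReal.ofReal (‖∫ z, f z • G z ∂μ‖ ^ 2) ≤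
      ENNReal.ofReal (M * L / (R:ℝ) * ∑ i, ‖θs i - θ‖ ^ 2) := by
    rw [ENNReal.ofReal_pow (norm_nonneg _), ofReal_norm_eq_enorm]
    calc ((‖∫ z, f z • G z ∂μ‖₊ : ENNReal)) ^ (2:ℕ)
        ≤ (A ^ (1/2:ℝ) * B ^ (1/2:ℝ)) ^ (2:ℕ) := pow_le_pow_left' hb 2
      _ = A * B := hsq
      _ ≤ ENNReal.ofReal ((L / (R:ℝ)) * ∑ i, ‖θs i - θ‖ ^ 2) * ENNReal.ofReal M :=
          mul_le_mul' hA hG2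
      _ = ENNReal.ofReal (M * L / (R:ℝ) * ∑ i, ‖θs i - θ‖ ^ 2) := by
          rw [← ENNReal.ofReal_mul (by positivity)]
          congr 1; ring
  have := (ENNReal.ofReal_le_ofReal_iff (by positivity)).mp hb2
  simpa [hf] using this
end
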